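/- For every integer n, the product of the bicomplex Pell number BP(n) with its i-conjugate satisfies BP(n) · (BP(n))*_i = 2·(−Q(2n+3)·1 + P(2n+3)·j). -/

import Mathlib

open scoped TensorProduct

noncomputable def bi : ℂ ⊗[ℝ] ℂ := Complex.I ⊗ₜ[ℝ] 1
noncomputable def bj : ℂ ⊗[ℝ] ℂ := (1 : ℂ) ⊗ₜ[ℝ] Complex.I
noncomputable def bij : ℂ ⊗[ℝ] ℂ := Complex.I ⊗ₜ[ℝ] Complex.I

/-- The bicomplex Pell number `BP n = P n + P (n+1) i + P (n+2) j + P (n+3) ij`. -/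
noncomputable def BP (P : ℤ → ℤ) (n : ℤ) : ℂ ⊗[ℝ] ℂ :=
  (P n : ℝ) • (1 : ℂ ⊗[ℝ] ℂ) + (P (n + 1) : ℝ) • bi + (P (n + 2) : ℝ) • bj +
    (P (n + 3) : ℝ) • bij

/-- The i-conjugate of the bicomplex Pell number. -/
noncomputable def BPconjI (P : ℤ → ℤ) (n : ℤ) : ℂ ⊗[ℝ] ℂ :=
  (P n : ℝ) • (1 : ℂ ⊗[ℝ] ℂ) - (P (n + 1) : ℝ) • bi + (P (n + 2) : ℝ) • bj -
    (P (n + 3) : ℝ) • bij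

lemma rec_unique (f g : ℤ → ℤ) (hf : ∀ k : ℤ, f (k+2) = 2*f (k+1) + f k)
    (hg : ∀ k : ℤ, g (k+2) = 2*g (k+1) + g k) (h0 : f 0 = g 0) (h1 : f 1 = g 1) :
    ∀ k : ℤ, f k = g k := by
  have key : ∀ k : ℤ, f k = g k ∧ f (k+1) = g (k+1) := by
    intro k
    induction k using Int.induction_on with
    | zero => exact ⟨h0, h1⟩
    | succ i ih =>
      refine ⟨ih.2, ?_⟩
      have e : (i:ℤ)+1+1 = i+2 := by ring
      rw [e]
      have h2 := hf i; have h3 := hg i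
      linarith [ih.1, ih.2]
    | pred i ih =>
      have e1 : (-(i:ℤ)-1)+2 = -i+1 := by ring
      have e2 : (-(i:ℤ)-1)+1 = -i := by ring
      have h2 := hf (-i-1); have h3 := hg (-i-1)
      rw [e1, e2] at h2 h3
      refine ⟨by linarith [ih.1, ih.2], ?_⟩
      rw [e2]; exact ih.1
  exact fun k => (key k).1

lemma tens_smul_one (a b : ℝ) :
    a • (1 : ℂ ⊗[ℝ] ℂ) + b • bi = (((a : ℂ) + b*Complex.I)) ⊗ₜ[ℝ] 1 := by
  rw [Algebra.TensorProduct.one_def, bi]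
  rw [TensorProduct.smul_tmul', TensorProduct.smul_tmul', ← TensorProduct.add_tmul]
  norm_num [Complex.real_smul]

lemma tens_smul_I (a b : ℝ) :
    a • bj + b • bij = (((a : ℂ) + b*Complex.I)) ⊗ₜ[ℝ] Complex.I := by
  rw [bj, bij, TensorProduct.smul_tmul', TensorProduct.smul_tmul', ← TensorProduct.add_tmul]
  norm_num [Complex.real_smul]

lemma tens_mul (z w z' w' : ℂ) :
    (z ⊗ₜ[ℝ] 1 + w ⊗ₜ[ℝ] Complex.I) * (z' ⊗ₜ[ℝ] 1 + w' ⊗ₜ[ℝ] Complex.I)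
    = (z*z' - w*w') ⊗ₜ[ℝ] 1 + (z*w' + w*z') ⊗ₜ[ℝ] Complex.I := by
  simp only [mul_add, add_mul, Algebra.TensorProduct.tmul_mul_tmul, Complex.I_mul_I,
    TensorProduct.sub_tmul, TensorProduct.add_tmul, mul_one, one_mul]
  have : (w * w') ⊗ₜ[ℝ] (-1 : ℂ) = -((w*w') ⊗ₜ[ℝ] (1:ℂ)) := by
    rw [TensorProduct.tmul_neg]
  rw [this]; abel

lemma real_tmul_one (r : ℝ) : ((r : ℂ)) ⊗ₜ[ℝ] (1 : ℂ) = r • (1 : ℂ ⊗[ℝ] ℂ) := by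
  rw [Algebra.TensorProduct.one_def, TensorProduct.smul_tmul', Complex.real_smul, mul_one]

lemma real_tmul_I (r : ℝ) : ((r : ℂ)) ⊗ₜ[ℝ] Complex.I = r • bj := by
  rw [bj, TensorProduct.smul_tmul', Complex.real_smul, mul_one]

theorem bicomplexPell_mul_conjI (P Q : ℤ → ℤ)
    (hP : ∀ n : ℤ, P (n + 2) = 2 * P (n + 1) + P n) (hP0 : P 0 = 0) (hP1 : P 1 = 1)
    (hQ : ∀ n : ℤ, Q (n + 2) = 2 * Q (n + 1) + Q n) (hQ0 : Q 0 = 2) (hQ1 : Q 1 = 2)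
    (n : ℤ) :
    BP P n * BPconjI P n =
      (2 : ℝ) • ((-(Q (2 * n + 3)) : ℝ) • (1 : ℂ ⊗[ℝ] ℂ) +
        (P (2 * n + 3) : ℝ) • bj) := by
  -- basic values
  have hP2 : P 2 = 2 := by have := hP 0; norm_num [hP0, hP1] at this; omega
  have hPneg : P (-1) = 1 := by
    have := hP (-1); norm_num [hP0, hP1] at this; omega
  -- addition formula
  have addid : ∀ m k : ℤ, P (m + k + 1) = P m * P k + P (m+1) * P (k+1) := by
    intro m
    refine rec_unique (fun k => P (m + k + 1)) (fun k => P m * P k + P (m+1) * P (k+1))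
      ?_ ?_ ?_ ?_
    · intro k
      have h := hP (m + k + 1)
      have e1 : m + k + 1 + 2 = m + (k+2) + 1 := by ring
      have e2 : m + k + 1 + 1 = m + (k+1) + 1 := by ring
      rw [e1, e2] at h
      simpa using h
    · intro k
      show P m * P (k+2) + P (m+1) * P (k+2+1)
          = 2 * (P m * P (k+1) + P (m+1) * P (k+1+1)) + (P m * P k + P (m+1) * P (k+1))
      have h1 := hP k; have h2 := hP (k+1)
      have e : k + 1 + 2 = k + 3 := by ring
      have e2 : k + 1 + 1 = k + 2 := by ring
      have e3 : k + 2 + 1 = k + 3 := by ring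
      rw [e, e2] at h2
      rw [e3, e2]
      linear_combination P m * h1 + P (m+1) * h2
    · show P (m + 0 + 1) = P m * P 0 + P (m+1) * P (0+1)
      norm_num [hP0, hP1]
    · show P (m + 1 + 1) = P m * P 1 + P (m+1) * P (1+1)
      have h := hP m
      have e : m + 1 + 1 = m + 2 := by ring
      rw [e, h]
      norm_num [hP1, hP2]
      ring
  -- Pell-Lucas in terms of Pell
  have QP : ∀ m : ℤ, Q m = P (m+1) + P (m-1) := by
    refine rec_unique Q (fun m => P (m+1) + P (m-1)) hQ ?_ ?_ ?_
    · intro k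
      show P (k+2+1) + P (k+2-1) = 2 * (P (k+1+1) + P (k+1-1)) + (P (k+1) + P (k-1))
      have h1 := hP (k+1); have h2 := hP (k-1)
      have e1 : k + 2 + 1 = k + 1 + 2 := by ring
      have e2 : k + 2 - 1 = k - 1 + 2 := by ring
      have e3 : k + 1 - 1 = k := by ring
      have e4 : k - 1 + 1 = k := by ring
      have e5 : k + 1 + 1 = k + 2 := by ring
      rw [e1, e2, e3, e5]
      rw [e4] at h2
      rw [e5] at h1
      omega
    · show Q 0 = P (0+1) + P (0-1)
      norm_num [hQ0, hPneg, hP1]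
    · show Q 1 = P (1+1) + P (1-1)
      norm_num [hQ1, hP0, hP2]
  -- the two coefficient identities
  have id2 : P n * P (n+2) + P (n+1) * P (n+3) = P (2*n+3) := by
    have h := addid n (n+2)
    have e1 : n + (n+2) + 1 = 2*n + 3 := by ring
    have e2 : n + 2 + 1 = n + 3 := by ring
    rw [e1, e2] at h
    omega
  have id1 : P n * P n + P (n+1) * P (n+1) - P (n+2) * P (n+2) - P (n+3) * P (n+3)
      = -2 * Q (2*n+3) := by
    have h1 := addid n n
    have e1 : n + n + 1 = 2*n + 1 := by ring
    rw [e1] at h1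
    have h2 := addid (n+2) (n+2)
    have e2 : n + 2 + (n+2) + 1 = 2*n + 5 := by ring
    have e3 : n + 2 + 1 = n + 3 := by ring
    rw [e2, e3] at h2
    have h3 := QP (2*n+3)
    have e4 : 2*n + 3 + 1 = 2*n + 4 := by ring
    have e5 : 2*n + 3 - 1 = 2*n + 2 := by ring
    rw [e4, e5] at h3
    have h4 := hP (2*n+3)
    have e6 : 2*n + 3 + 2 = 2*n + 5 := by ring
    have e7 : 2*n + 3 + 1 = 2*n + 4 := by ring
    rw [e6, e7] at h4
    have h5 := hP (2*n+1)
    have e8 : 2*n + 1 + 2 = 2*n + 3 := by ring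
    have e9 : 2*n + 1 + 1 = 2*n + 2 := by ring
    rw [e8, e9] at h5
    omega
  -- now the tensor computation
  set a : ℝ := (P n : ℝ) with ha
  set b : ℝ := (P (n+1) : ℝ) with hb
  set c : ℝ := (P (n+2) : ℝ) with hc
  set d : ℝ := (P (n+3) : ℝ) with hd
  have hBP : BP P n = ((a:ℂ) + b*Complex.I) ⊗ₜ[ℝ] 1 + ((c:ℂ) + d*Complex.I) ⊗ₜ[ℝ] Complex.I := by
    rw [BP, ← tens_smul_one, ← tens_smul_I]; ring
  have hBPc : BPconjI P n
      = ((a:ℂ) + (-b)*Complex.I) ⊗ₜ[ℝ] 1 + ((c:ℂ) + (-d)*Complex.I) ⊗ₜ[ℝ] Complex.I := by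
    have h1 := tens_smul_one a (-b)
    have h2 := tens_smul_I c (-d)
    push_cast at h1 h2
    rw [BPconjI, ← h1, ← h2]
    module
  rw [hBP, hBPc, tens_mul]
  have hz : ((a:ℂ) + b*Complex.I) * ((a:ℂ) + (-b)*Complex.I)
      - ((c:ℂ) + d*Complex.I) * ((c:ℂ) + (-d)*Complex.I)
      = ((a*a + b*b - c*c - d*d : ℝ) : ℂ) := by
    push_cast
    ring_nf
    rw [Complex.I_sq]
    ring
  have hw : ((a:ℂ) + b*Complex.I) * ((c:ℂ) + (-d)*Complex.I)
      + ((c:ℂ) + d*Complex.I) * ((a:ℂ) + (-b)*Complex.I)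
      = ((2*(a*c + b*d) : ℝ) : ℂ) := by
    push_cast
    ring_nf
    rw [Complex.I_sq]
    ring
  rw [hz, hw, real_tmul_one, real_tmul_I]
  have key1 : a*a + b*b - c*c - d*d = (2:ℝ) * (-(Q (2*n+3) : ℝ)) := by
    have h : ((P n * P n + P (n+1) * P (n+1) - P (n+2) * P (n+2) - P (n+3) * P (n+3) : ℤ) : ℝ)
        = ((-2 * Q (2*n+3) : ℤ) : ℝ) := by exact_mod_cast congrArg (fun z : ℤ => (z : ℝ)) id1
    push_cast at h
    rw [ha, hb, hc, hd]
    linarith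
  have key2 : 2*(a*c + b*d) = (2:ℝ) * ((P (2*n+3) : ℝ)) := by
    have h : ((P n * P (n+2) + P (n+1) * P (n+3) : ℤ) : ℝ) = ((P (2*n+3) : ℤ) : ℝ) := by
      exact_mod_cast congrArg (fun z : ℤ => (z : ℝ)) id2
    push_cast at h
    rw [ha, hb, hc, hd]
    linarith
  rw [key1, key2, smul_add]
  rw [mul_smul, mul_smul]
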